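/- The product Bernoulli(p) measure ψ on {0,1}^L, given by ψ(r) = p^{Σ_x r(x)} q^{L − Σ_x r(x)}, is stationary for the driven-dissipative transition kernel W of the DSS: Wψ = ψ. Moreover ψ(r) > 0 for every r ∈ {0,1}^L, so the set of recurrent configurations is all of {0,1}^L. -/

import Mathlib

namespace DSS

/-- A state of the DSS on `L` sites: a stable field `z : Fin L → Bool` together with a
finite multiset `w` of waiting particles (particles past site `L` have left the system). -/
structure State (L : ℕ) where
  z : Fin L → Bool
  w : Multiset (Fin L)

variable {L : ℕ}

/-- The multiset holding the right neighbour of `x`; empty if the particle leaves the system. -/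
def succSite (L : ℕ) (x : Fin L) : Multiset (Fin L) :=
  if h : x.val + 1 < L then {(⟨x.val + 1, h⟩ : Fin L)} else 0

/-- Evolution of a waiting particle at `x` when `z x = 1`: the waiting particle moves to
`x+1` and the stable particle at `x` becomes a waiting particle at `x`. -/
def topple (s : State L) (x : Fin L) : State L :=
  ⟨Function.update s.z x false, s.w + succSite L x⟩

/-- Evolution of a waiting particle at `x` when `z x = 0`, settling branch (probability p). -/
def settle (s : State L) (x : Fin L) : State L :=
  ⟨Function.update s.z x true, s.w.erase x⟩

/-- Evolution of a waiting particle at `x` when `z x = 0`, jumping branch (probability q). -/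
def jump (s : State L) (x : Fin L) : State L :=
  ⟨s.z, s.w.erase x + succSite L x⟩

/-- `stabilizeAux p q R n s c` is the probability that, evolving one waiting particle at a
time (the particle being selected by the rule `R`), the process started from `s` reaches
within `n` elementary steps a stable state whose stable field is `c`. -/
noncomputable def stabilizeAux (p q : ℝ) (R : State L → Option (Fin L)) :
    ℕ → State L → (Fin L → Bool) → ℝ
  | 0, s, c => if s.w = 0 ∧ s.z = c then 1 else 0
  | n + 1, s, c =>
    match R s with
    | none => if s.z = c then 1 else 0
    | some x =>
      if s.z x then stabilizeAux p q R n (topple s x) c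
      else p * stabilizeAux p q R n (settle s x) c
        + q * stabilizeAux p q R n (jump s x) c

/-- The canonical evolution rule: evolve the leftmost waiting particle. -/
def minRule (s : State L) : Option (Fin L) :=
  if h : s.w = 0 then none
  else some (s.w.toFinset.min'
    (Finset.nonempty_iff_ne_empty.mpr (by simpa [Multiset.toFinset_eq_empty] using h)))

/-- A termination measure: the stabilization process started from `s` ends after at most
`fuel s` elementary steps, whatever the rule and the randomness. -/
def potential (s : State L) : ℕ :=
  (s.w.map fun x => L + 1 - x.val).sum + ∑ x : Fin L, (if s.z x then L + 1 - x.val else 0)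

def fuel (s : State L) : ℕ := 2 * potential s + Multiset.card s.w

/-- Add one waiting particle at site `1` (index `0`). -/
def addGrain (r : Fin L → Bool) : State L :=
  ⟨r, if h : 0 < L then {(⟨0, h⟩ : Fin L)} else 0⟩

/-- The driven-dissipative transition kernel `W` of the DSS: add a particle at site 1 and
stabilize. -/
noncomputable def Wker (p q : ℝ) (r r' : Fin L → Bool) : ℝ :=
  stabilizeAux p q minRule (fuel (addGrain r)) (addGrain r) r'

/-- `W` as a matrix on stable configurations. -/
noncomputable def Wmat (p q : ℝ) (L : ℕ) :
    Matrix (Fin L → Bool) (Fin L → Bool) ℝ :=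
  Matrix.of fun r r' => Wker p q r r'

/-- The product Bernoulli(p) measure `ψ(r) = p^(Σ r) q^(L - Σ r)`. -/
noncomputable def psi (p q : ℝ) {L : ℕ} (r : Fin L → Bool) : ℝ :=
  p ^ (Finset.univ.filter fun x => r x = true).card *
    q ^ (L - (Finset.univ.filter fun x => r x = true).card)


/-! ### Auxiliary development -/

noncomputable def stab (p q : ℝ) (s : State L) (c : Fin L → Bool) : ℝ :=
  stabilizeAux p q minRule (fuel s) s c

lemma minRule_none {s : State L} (h : s.w = 0) : minRule s = none := by
  simp [minRule, h]

lemma minRule_mem {s : State L} {x : Fin L} (h : minRule s = some x) : x ∈ s.w := by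
  unfold minRule at h
  split at h
  · simp at h
  · have hx : x ∈ s.w.toFinset := by
      rw [Option.some_inj] at h
      rw [← h]
      exact s.w.toFinset.min'_mem _
    simpa [Multiset.mem_toFinset] using hx

def wsum (L : ℕ) (w : Multiset (Fin L)) : ℕ := (w.map fun x => L + 1 - x.val).sum

lemma wsum_add (a b : Multiset (Fin L)) : wsum L (a + b) = wsum L a + wsum L b := by
  simp [wsum]

lemma wsum_erase {w : Multiset (Fin L)} {x : Fin L} (hx : x ∈ w) :
    wsum L w = (L + 1 - x.val) + wsum L (w.erase x) := by
  conv_lhs => rw [← Multiset.cons_erase hx]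
  simp [wsum]

lemma wsum_succSite (x : Fin L) : wsum L (succSite L x) + 1 ≤ L + 1 - x.val := by
  have hx := x.isLt
  unfold wsum succSite
  split
  · simp only [Multiset.map_singleton, Multiset.sum_singleton]
    omega
  · simp only [Multiset.map_zero, Multiset.sum_zero]
    omega

lemma card_succSite (x : Fin L) : Multiset.card (succSite L x) ≤ 1 := by
  unfold succSite; split <;> simp

lemma zsum_split (z : Fin L → Bool) (x : Fin L) :
    (∑ y : Fin L, if z y then L + 1 - y.val else 0)
      = (if z x then L + 1 - x.val else 0)
        + ∑ y ∈ Finset.univ.erase x, (if z y then L + 1 - y.val else 0) :=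
  (Finset.add_sum_erase _ _ (Finset.mem_univ x)).symm

lemma zsum_update (z : Fin L → Bool) (x : Fin L) (b : Bool) :
    (∑ y : Fin L, if Function.update z x b y then L + 1 - y.val else 0)
      = (if b then L + 1 - x.val else 0)
        + ∑ y ∈ Finset.univ.erase x, (if z y then L + 1 - y.val else 0) := by
  rw [zsum_split (Function.update z x b) x, Function.update_self]
  congr 1
  exact Finset.sum_congr rfl fun y hy => by
    rw [Function.update_of_ne (Finset.ne_of_mem_erase hy)]

lemma fuel_topple {s : State L} {x : Fin L} (hz : s.z x = true) :
    fuel (topple s x) < fuel s := by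
  have h1 := wsum_succSite x
  have h2 := card_succSite x
  set E := ∑ y ∈ Finset.univ.erase x, (if s.z y then L + 1 - y.val else 0) with hE
  have hzs : (∑ y : Fin L, if s.z y then L + 1 - y.val else 0) = (L + 1 - x.val) + E := by
    rw [zsum_split s.z x, hz, if_pos rfl]
  have hpot : potential s = wsum L s.w + ((L + 1 - x.val) + E) := by
    rw [potential, hzs]; rfl
  have hpot2 : potential (topple s x) = (wsum L s.w + wsum L (succSite L x)) + E := by
    show wsum L (s.w + succSite L x)
        + (∑ y : Fin L, if Function.update s.z x false y then L + 1 - y.val else 0) = _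
    rw [wsum_add, zsum_update]
    simp [hE]
  have hcard : Multiset.card (topple s x).w
      = Multiset.card s.w + Multiset.card (succSite L x) := by
    simp [topple]
  unfold fuel
  rw [hpot, hpot2, hcard]
  omega

lemma fuel_settle {s : State L} {x : Fin L} (hx : x ∈ s.w) (hz : s.z x = false) :
    fuel (settle s x) < fuel s := by
  set E := ∑ y ∈ Finset.univ.erase x, (if s.z y then L + 1 - y.val else 0) with hE
  have hzs : (∑ y : Fin L, if s.z y then L + 1 - y.val else 0) = E := by
    rw [zsum_split s.z x, hz]; simp [hE]
  have hw := wsum_erase hx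
  have hpot : potential s = (L + 1 - x.val) + wsum L (s.w.erase x) + E := by
    rw [potential, hzs]
    show wsum L s.w + E = _
    omega
  have hpot2 : potential (settle s x) = wsum L (s.w.erase x) + ((L + 1 - x.val) + E) := by
    show wsum L (s.w.erase x)
        + (∑ y : Fin L, if Function.update s.z x true y then L + 1 - y.val else 0) = _
    rw [zsum_update]
    simp [hE]
  have hcard : Multiset.card (settle s x).w = Multiset.card s.w - 1 := by
    simp [settle, Multiset.card_erase_of_mem hx]
  have hc1 : 0 < Multiset.card s.w := Multiset.card_pos.mpr (fun h0 => by simp [h0] at hx)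
  unfold fuel
  rw [hpot, hpot2, hcard]
  omega

lemma fuel_jump {s : State L} {x : Fin L} (hx : x ∈ s.w) :
    fuel (jump s x) < fuel s := by
  have h1 := wsum_succSite x
  have h2 := card_succSite x
  have hw := wsum_erase hx
  have hc1 : 0 < Multiset.card s.w := Multiset.card_pos.mpr (fun h0 => by simp [h0] at hx)
  have hpot : potential s = (L + 1 - x.val) + wsum L (s.w.erase x)
      + ∑ y : Fin L, (if s.z y then L + 1 - y.val else 0) := by
    show wsum L s.w + (∑ y : Fin L, (if s.z y then L + 1 - y.val else 0)) = _
    omega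
  have hpot2 : potential (jump s x) = wsum L (s.w.erase x) + wsum L (succSite L x)
      + ∑ y : Fin L, (if s.z y then L + 1 - y.val else 0) := by
    show wsum L (s.w.erase x + succSite L x) + _ = _
    rw [wsum_add]
    rfl
  have hcard : Multiset.card (jump s x).w
      = Multiset.card s.w - 1 + Multiset.card (succSite L x) := by
    simp [jump, Multiset.card_erase_of_mem hx]
  unfold fuel
  rw [hpot, hpot2, hcard]
  omega

lemma stabA_congr (p q : ℝ) (c : Fin L → Bool) :
    ∀ n m (s : State L), fuel s ≤ n → fuel s ≤ m →
      stabilizeAux p q minRule n s c = stabilizeAux p q minRule m s c := by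
  intro n
  induction n using Nat.strongRecOn with
  | ind n IH =>
    intro m s hn hm
    cases hw : minRule s with
    | none =>
      have hw0 : s.w = 0 := by
        by_contra h0
        simp [minRule, h0] at hw
      have key : ∀ k, stabilizeAux p q minRule k s c = if s.z = c then 1 else 0 := by
        intro k
        match k with
        | 0 => simp [stabilizeAux, hw0]
        | k + 1 => simp only [stabilizeAux, hw]
      rw [key n, key m]
    | some x =>
      have hxw := minRule_mem hw
      have hcard : 0 < Multiset.card s.w := Multiset.card_pos.mpr (fun h0 => by simp [h0] at hxw)
      have hfs : 1 ≤ fuel s := by unfold fuel; omega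
      obtain ⟨n', rfl⟩ : ∃ n', n = n' + 1 := ⟨n - 1, by omega⟩
      obtain ⟨m', rfl⟩ : ∃ m', m = m' + 1 := ⟨m - 1, by omega⟩
      simp only [stabilizeAux, hw]
      cases hz : s.z x with
      | true =>
        have hd := fuel_topple hz
        rw [if_pos rfl, if_pos rfl]
        exact IH n' (by omega) m' _ (by omega) (by omega)
      | false =>
        have hd1 := fuel_settle hxw hz
        have hd2 := fuel_jump hxw
        rw [if_neg (by simp), if_neg (by simp)]
        rw [IH n' (by omega) m' (settle s x) (by omega) (by omega),
          IH n' (by omega) m' (jump s x) (by omega) (by omega)]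

lemma stab_of_minRule {s : State L} {x : Fin L} (hw : minRule s = some x) (p q : ℝ)
    (c : Fin L → Bool) :
    stab p q s c = if s.z x then stab p q (topple s x) c
      else p * stab p q (settle s x) c + q * stab p q (jump s x) c := by
  have hxw := minRule_mem hw
  have hcard : 0 < Multiset.card s.w := Multiset.card_pos.mpr (fun h0 => by simp [h0] at hxw)
  have hfs : 1 ≤ fuel s := by unfold fuel; omega
  obtain ⟨f, hf⟩ : ∃ f, fuel s = f + 1 := ⟨fuel s - 1, by omega⟩
  unfold stab
  rw [hf]
  simp only [stabilizeAux, hw]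
  cases hz : s.z x with
  | true =>
    have hd := fuel_topple hz
    rw [if_pos rfl, if_pos rfl]
    exact stabA_congr p q c f (fuel (topple s x)) _ (by omega) le_rfl
  | false =>
    have hd1 := fuel_settle hxw hz
    have hd2 := fuel_jump hxw
    rw [if_neg (by simp), if_neg (by simp)]
    rw [stabA_congr p q c f (fuel (settle s x)) _ (by omega) le_rfl,
      stabA_congr p q c f (fuel (jump s x)) _ (by omega) le_rfl]

lemma stab_of_w_eq_zero {s : State L} (h : s.w = 0) (p q : ℝ) (c : Fin L → Bool) :
    stab p q s c = if s.z = c then 1 else 0 := by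
  unfold stab
  cases hf : fuel s with
  | zero => simp [stabilizeAux, h]
  | succ f => simp only [stabilizeAux, minRule_none h]

lemma mem_succSite {y z : Fin L} (h : z ∈ succSite L y) : z.val = y.val + 1 := by
  unfold succSite at h
  split at h
  · rw [Multiset.mem_singleton] at h
    subst h
    rfl
  · simp at h

lemma stabA_vanish (p q : ℝ) (c : Fin L → Bool) :
    ∀ n (s : State L) (x : Fin L), s.z x ≠ c x → (∀ y ∈ s.w, x.val < y.val) →
      stabilizeAux p q minRule n s c = 0 := by
  intro n
  induction n with
  | zero =>
    intro s x hz hw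
    simp only [stabilizeAux]
    rw [if_neg]
    rintro ⟨-, hzc⟩
    exact hz (congrFun hzc x)
  | succ n IH =>
    intro s x hz hw
    cases hR : minRule s with
    | none =>
      simp only [stabilizeAux, hR]
      exact if_neg (fun hzc => hz (congrFun hzc x))
    | some y =>
      simp only [stabilizeAux, hR]
      have hyw := minRule_mem hR
      have hxy : x.val < y.val := hw y hyw
      have hxney : x ≠ y := fun h => by subst h; omega
      have hsucc : ∀ z ∈ succSite L y, x.val < z.val := fun z hzm => by
        rw [mem_succSite hzm]; omega
      cases hzy : s.z y with
      | true =>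
        rw [if_pos rfl]
        apply IH _ x
        · show Function.update s.z y false x ≠ c x
          rw [Function.update_of_ne hxney]
          exact hz
        · intro z hzm
          rcases Multiset.mem_add.mp hzm with h | h
          · exact hw z h
          · exact hsucc z h
      | false =>
        rw [if_neg (by simp)]
        rw [IH (settle s y) x (by
            show Function.update s.z y true x ≠ c x
            rw [Function.update_of_ne hxney]
            exact hz)
          (fun z hzm => hw z (Multiset.mem_of_mem_erase hzm))]
        rw [IH (jump s y) x hz (fun z hzm => by
          rcases Multiset.mem_add.mp hzm with h | h
          · exact hw z (Multiset.mem_of_mem_erase h)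
          · exact hsucc z h)]
        ring

lemma stab_vanish {s : State L} {x : Fin L} (p q : ℝ) (c : Fin L → Bool)
    (hz : s.z x ≠ c x) (hw : ∀ y ∈ s.w, x.val < y.val) : stab p q s c = 0 :=
  stabA_vanish p q c _ s x hz hw

/-! ### Site multisets -/

def siteM (L m : ℕ) : Multiset (Fin L) := if h : m < L then {(⟨m, h⟩ : Fin L)} else 0

def wst (L m k j : ℕ) : Multiset (Fin L) := k • siteM L m + j • siteM L (m + 1)

lemma succSite_eq_siteM {m : ℕ} (h : m < L) : succSite L ⟨m, h⟩ = siteM L (m + 1) := rfl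

lemma mem_siteM {m : ℕ} {y : Fin L} (h : y ∈ siteM L m) : y.val = m := by
  unfold siteM at h
  split at h
  · rw [Multiset.mem_singleton] at h
    subst h
    rfl
  · simp at h

lemma mem_wst {m k j : ℕ} {y : Fin L} (h : y ∈ wst L m k j) : y.val = m ∨ y.val = m + 1 := by
  rcases Multiset.mem_add.mp h with h | h
  · exact Or.inl (mem_siteM (Multiset.mem_of_mem_nsmul h))
  · exact Or.inr (mem_siteM (Multiset.mem_of_mem_nsmul h))

lemma mem_wst_zero {m j : ℕ} {y : Fin L} (h : y ∈ wst L m 0 j) : y.val = m + 1 := by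
  unfold wst at h
  rw [zero_nsmul, zero_add] at h
  exact mem_siteM (Multiset.mem_of_mem_nsmul h)

lemma mem_wst_self {m : ℕ} (hm : m < L) (k j : ℕ) : (⟨m, hm⟩ : Fin L) ∈ wst L m (k + 1) j := by
  apply Multiset.mem_add.mpr
  left
  rw [Multiset.mem_nsmul]
  refine ⟨by omega, ?_⟩
  unfold siteM
  rw [dif_pos hm, Multiset.mem_singleton]

lemma minRule_wst {m : ℕ} (hm : m < L) (k j : ℕ) (z : Fin L → Bool) :
    minRule (⟨z, wst L m (k + 1) j⟩ : State L) = some ⟨m, hm⟩ := by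
  have hmem : (⟨m, hm⟩ : Fin L) ∈ wst L m (k + 1) j := mem_wst_self hm k j
  have hne : wst L m (k + 1) j ≠ 0 := fun h0 => by rw [h0] at hmem; simp at hmem
  show (if h : wst L m (k + 1) j = 0 then none else _) = _
  rw [dif_neg hne]
  congr 1
  apply le_antisymm
  · exact Finset.min'_le _ _ (by simpa [Multiset.mem_toFinset] using hmem)
  · apply Finset.le_min'
    intro y hy
    have := mem_wst (Multiset.mem_toFinset.mp hy)
    simp only [Fin.le_def]
    omega

lemma wst_succ_add {m : ℕ} (hm : m < L) (k j : ℕ) :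
    wst L m k j + succSite L ⟨m, hm⟩ = wst L m k (j + 1) := by
  rw [succSite_eq_siteM hm]
  unfold wst
  rw [succ_nsmul, add_assoc]

lemma wst_erase {m : ℕ} (hm : m < L) (k j : ℕ) :
    (wst L m (k + 1) j).erase ⟨m, hm⟩ = wst L m k j := by
  unfold wst
  have hs : siteM L m = {(⟨m, hm⟩ : Fin L)} := dif_pos hm
  rw [hs, Multiset.nsmul_singleton, Multiset.nsmul_singleton, Multiset.replicate_succ]
  rw [Multiset.erase_add_left_pos _ (Multiset.mem_cons_self _ _), Multiset.erase_cons_head]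

lemma wst_zero_left (m j : ℕ) : wst L m 0 j = wst L (m + 1) j 0 := by
  unfold wst
  rw [zero_nsmul, zero_nsmul, zero_add, add_zero]

lemma wst_top (k j : ℕ) : wst L L k j = 0 := by
  unfold wst siteM
  rw [dif_neg (lt_irrefl L), dif_neg (by omega)]
  simp

/-! ### Overridden configurations -/

def ovr (m : ℕ) (c r : Fin L → Bool) : Fin L → Bool := fun x => if x.val < m then c x else r x

def zH (m : ℕ) (b : Bool) (c r : Fin L → Bool) : Fin L → Bool :=
  fun x => if x.val < m then c x else if x.val = m then b else r x

lemma ovr_zero (c r : Fin L → Bool) : ovr 0 c r = r := funext fun x => by simp [ovr]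

lemma ovr_top (c r : Fin L → Bool) : ovr L c r = c := funext fun x => by simp [ovr, x.isLt]

lemma zH_apply_m {m : ℕ} (hm : m < L) (b : Bool) (c r : Fin L → Bool) :
    zH m b c r ⟨m, hm⟩ = b := by simp [zH]

lemma zH_eq_ovr {m : ℕ} (hm : m < L) (c r : Fin L → Bool) :
    zH m (c ⟨m, hm⟩) c r = ovr (m + 1) c r := by
  funext x
  unfold zH ovr
  by_cases h1 : x.val < m
  · rw [if_pos h1, if_pos (by omega)]
  · by_cases h2 : x.val = m
    · have hx : x = ⟨m, hm⟩ := Fin.ext h2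
      rw [if_neg h1, if_pos h2, if_pos (by omega), hx]
    · rw [if_neg h1, if_neg h2, if_neg (by omega)]

lemma ovr_eq_zH {m : ℕ} (hm : m < L) (c r : Fin L → Bool) :
    ovr m c r = zH m (r ⟨m, hm⟩) c r := by
  funext x
  unfold ovr zH
  by_cases h1 : x.val < m
  · simp [h1]
  · by_cases h2 : x.val = m
    · have hx : x = ⟨m, hm⟩ := Fin.ext h2
      rw [if_neg h1, if_neg h1, if_pos h2, hx]
    · simp [h1, h2]

lemma update_zH {m : ℕ} (hm : m < L) (b b' : Bool) (c r : Fin L → Bool) :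
    Function.update (zH m b c r) ⟨m, hm⟩ b' = zH m b' c r := by
  funext x
  rcases eq_or_ne x ⟨m, hm⟩ with rfl | hne
  · rw [Function.update_self]
    simp [zH]
  · rw [Function.update_of_ne hne]
    have hxm : x.val ≠ m := fun h => hne (Fin.ext h)
    simp [zH, hxm]

lemma zH_update {m : ℕ} (hm : m < L) (b v : Bool) (c r : Fin L → Bool) :
    zH m b c (Function.update r ⟨m, hm⟩ v) = zH m b c r := by
  funext x
  unfold zH
  by_cases h1 : x.val < m
  · simp [h1]
  by_cases h2 : x.val = m
  · simp [h1, h2]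
  have hne : x ≠ ⟨m, hm⟩ := fun h => h2 (by rw [h])
  simp [h1, h2, Function.update_of_ne hne]

/-! ### psi lemmas -/

lemma psi_prod (p q : ℝ) (r : Fin L → Bool) :
    psi p q r = ∏ x : Fin L, (if r x then p else q) := by
  rw [Finset.prod_ite, Finset.prod_const, Finset.prod_const, psi]
  have h := Finset.card_filter_add_card_filter_not
    (s := (Finset.univ : Finset (Fin L))) (p := fun x => r x = true)
  rw [Finset.card_univ, Fintype.card_fin] at h
  congr 2
  omega

lemma psi_sum (p q : ℝ) (hpq : p + q = 1) :
    ∑ r : Fin L → Bool, psi p q r = 1 := by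
  have h : ∀ r : Fin L → Bool, psi p q r = ∏ x : Fin L, (if r x then p else q) := psi_prod p q
  simp_rw [h]
  rw [← Fintype.piFinset_univ,
    ← Finset.prod_univ_sum (fun _ : Fin L => (Finset.univ : Finset Bool))
      (fun _ b => if b = true then p else q)]
  simp [hpq]

lemma psi_update_mul (p q : ℝ) (r : Fin L → Bool) (i : Fin L) (v : Bool) :
    psi p q (Function.update r i v) * (if r i then p else q)
      = psi p q r * (if v then p else q) := by
  rw [psi_prod, psi_prod,
    ← Finset.mul_prod_erase Finset.univ (fun x => if Function.update r i v x then p else q)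
      (Finset.mem_univ i),
    ← Finset.mul_prod_erase Finset.univ (fun x => if r x then p else q) (Finset.mem_univ i),
    Function.update_self]
  have he : ∏ x ∈ Finset.univ.erase i, (if Function.update r i v x then p else q)
      = ∏ x ∈ Finset.univ.erase i, (if r x then p else q) :=
    Finset.prod_congr rfl fun x hx => by
      rw [Function.update_of_ne (Finset.ne_of_mem_erase hx)]
  rw [he]
  ring

lemma cross_sum (p q : ℝ) (i : Fin L) (F : (Fin L → Bool) → ℝ)
    (hF : ∀ r v, F (Function.update r i v) = F r) :
    q * ∑ r ∈ Finset.univ.filter (fun r : Fin L → Bool => r i = true), psi p q r * F r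
      = p * ∑ r ∈ Finset.univ.filter (fun r : Fin L → Bool => r i = false), psi p q r * F r := by
  rw [Finset.mul_sum, Finset.mul_sum]
  apply Finset.sum_nbij' (i := fun r => Function.update r i false)
    (j := fun r => Function.update r i true)
  · intro a ha
    simp [Function.update_self]
  · intro a ha
    simp [Function.update_self]
  · intro a ha
    simp only [Finset.mem_filter] at ha
    funext x
    rcases eq_or_ne x i with rfl | hne
    · rw [Function.update_self, ha.2]
    · rw [Function.update_of_ne hne, Function.update_of_ne hne]
  · intro a ha
    simp only [Finset.mem_filter] at ha
    funext x
    rcases eq_or_ne x i with rfl | hne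
    · rw [Function.update_self, ha.2]
    · rw [Function.update_of_ne hne, Function.update_of_ne hne]
  · intro a ha
    simp only [Finset.mem_filter] at ha
    have h1 := psi_update_mul p q a i false
    rw [ha.2, if_pos rfl, if_neg (by simp)] at h1
    rw [hF a false]
    linear_combination (-(F a)) * h1

lemma sum_filter_psi (p q : ℝ) (hpq : p + q = 1) (i : Fin L) (F : (Fin L → Bool) → ℝ)
    (hF : ∀ r v, F (Function.update r i v) = F r) (b : Bool) :
    ∑ r ∈ Finset.univ.filter (fun r : Fin L → Bool => r i = b), psi p q r * F r
      = (if b then p else q) * ∑ r : Fin L → Bool, psi p q r * F r := by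
  have hsplit : (∑ r ∈ Finset.univ.filter (fun r : Fin L → Bool => r i = true), psi p q r * F r)
      + ∑ r ∈ Finset.univ.filter (fun r : Fin L → Bool => r i = false), psi p q r * F r
      = ∑ r : Fin L → Bool, psi p q r * F r := by
    rw [← Finset.sum_filter_add_sum_filter_not Finset.univ
      (fun r : Fin L → Bool => r i = true) (fun r => psi p q r * F r)]
    congr 1
    apply Finset.sum_congr _ (fun _ _ => rfl)
    apply Finset.filter_congr
    intro x _
    simp
  have hcross := cross_sum p q i F hF
  cases b with
  | false =>
    rw [if_neg (by simp)]
    set St := ∑ r ∈ Finset.univ.filter (fun r : Fin L → Bool => r i = true), psi p q r * F r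
    set Sf := ∑ r ∈ Finset.univ.filter (fun r : Fin L → Bool => r i = false), psi p q r * F r
    set S := ∑ r : Fin L → Bool, psi p q r * F r
    linear_combination - hcross - Sf * hpq + Sf + q * hsplit
  | true =>
    rw [if_pos rfl]
    set St := ∑ r ∈ Finset.univ.filter (fun r : Fin L → Bool => r i = true), psi p q r * F r
    set Sf := ∑ r ∈ Finset.univ.filter (fun r : Fin L → Bool => r i = false), psi p q r * F r
    set S := ∑ r : Fin L → Bool, psi p q r * F r
    linear_combination hcross - St * hpq + St + p * hsplit

lemma split_sum (p q : ℝ) (hpq : p + q = 1) (i : Fin L) (F : Bool → (Fin L → Bool) → ℝ)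
    (hF : ∀ b r v, F b (Function.update r i v) = F b r) :
    ∑ r : Fin L → Bool, psi p q r * F (r i) r
      = p * (∑ r : Fin L → Bool, psi p q r * F true r)
        + q * ∑ r : Fin L → Bool, psi p q r * F false r := by
  rw [← Finset.sum_filter_add_sum_filter_not Finset.univ
    (fun r : Fin L → Bool => r i = true) (fun r => psi p q r * F (r i) r)]
  have h1 : ∑ r ∈ Finset.univ.filter (fun r : Fin L → Bool => r i = true),
      psi p q r * F (r i) r
      = ∑ r ∈ Finset.univ.filter (fun r : Fin L → Bool => r i = true), psi p q r * F true r :=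
    Finset.sum_congr rfl fun r hr => by rw [(Finset.mem_filter.mp hr).2]
  have h2 : ∑ r ∈ Finset.univ.filter (fun r : Fin L → Bool => ¬ (r i = true)),
      psi p q r * F (r i) r
      = ∑ r ∈ Finset.univ.filter (fun r : Fin L → Bool => r i = false), psi p q r * F false r := by
    rw [show (Finset.univ.filter fun r : Fin L → Bool => ¬ (r i = true))
        = Finset.univ.filter fun r : Fin L → Bool => r i = false from
      Finset.filter_congr fun x _ => by simp]
    exact Finset.sum_congr rfl fun r hr => by rw [(Finset.mem_filter.mp hr).2]
  rw [h1, h2, sum_filter_psi p q hpq i (F true) (hF true) true,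
    sum_filter_psi p q hpq i (F false) (hF false) false]
  simp

/-! ### The main sums -/

noncomputable def Gs (p q : ℝ) (c : Fin L → Bool) (m k j : ℕ) : ℝ :=
  ∑ r : Fin L → Bool, psi p q r * stab p q ⟨ovr m c r, wst L m k j⟩ c

noncomputable def Hs (p q : ℝ) (c : Fin L → Bool) (m k j : ℕ) (b : Bool) : ℝ :=
  ∑ r : Fin L → Bool, psi p q r * stab p q ⟨zH m b c r, wst L m k j⟩ c

lemma Hs_zero {m : ℕ} (hm : m < L) (p q : ℝ) (c : Fin L → Bool) (j : ℕ) (b : Bool) :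
    Hs p q c m 0 j b = if b = c ⟨m, hm⟩ then Gs p q c (m + 1) j 0 else 0 := by
  by_cases hb : b = c ⟨m, hm⟩
  · rw [if_pos hb, Hs, Gs]
    apply Finset.sum_congr rfl
    intro r _
    subst hb
    rw [zH_eq_ovr hm, wst_zero_left]
  · rw [if_neg hb, Hs]
    rw [Finset.sum_eq_zero]
    intro r _
    rw [stab_vanish p q c (x := ⟨m, hm⟩)
      (by show zH m b c r ⟨m, hm⟩ ≠ c ⟨m, hm⟩; rw [zH_apply_m hm]; exact hb)
      (fun y hy => by
        have := mem_wst_zero hy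
        show m < (y : ℕ)
        omega), mul_zero]

lemma Hs_topple {m : ℕ} (hm : m < L) (p q : ℝ) (c : Fin L → Bool) (k j : ℕ) :
    Hs p q c m (k + 1) j true = Hs p q c m (k + 1) (j + 1) false := by
  apply Finset.sum_congr rfl
  intro r _
  congr 1
  rw [stab_of_minRule (minRule_wst hm k j (zH m true c r)) p q c]
  rw [show (⟨zH m true c r, wst L m (k + 1) j⟩ : State L).z ⟨m, hm⟩ = true from
    zH_apply_m hm true c r, if_pos rfl]
  congr 1
  show (⟨Function.update (zH m true c r) ⟨m, hm⟩ false,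
      wst L m (k + 1) j + succSite L ⟨m, hm⟩⟩ : State L) = _
  rw [update_zH hm, wst_succ_add hm]

lemma Hs_step {m : ℕ} (hm : m < L) (p q : ℝ) (c : Fin L → Bool) (k j : ℕ) :
    Hs p q c m (k + 1) j false
      = p * Hs p q c m k j true + q * Hs p q c m k (j + 1) false := by
  unfold Hs
  rw [Finset.mul_sum, Finset.mul_sum, ← Finset.sum_add_distrib]
  apply Finset.sum_congr rfl
  intro r _
  have hrec := stab_of_minRule (minRule_wst hm k j (zH m false c r)) p q c
  rw [show (⟨zH m false c r, wst L m (k + 1) j⟩ : State L).z ⟨m, hm⟩ = false from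
    zH_apply_m hm false c r, if_neg (by simp)] at hrec
  have hsettle : settle (⟨zH m false c r, wst L m (k + 1) j⟩ : State L) ⟨m, hm⟩
      = ⟨zH m true c r, wst L m k j⟩ := by
    show (⟨Function.update (zH m false c r) ⟨m, hm⟩ true,
        (wst L m (k + 1) j).erase ⟨m, hm⟩⟩ : State L) = _
    rw [update_zH hm, wst_erase hm]
  have hjump : jump (⟨zH m false c r, wst L m (k + 1) j⟩ : State L) ⟨m, hm⟩
      = ⟨zH m false c r, wst L m k (j + 1)⟩ := by
    show (⟨zH m false c r,
        (wst L m (k + 1) j).erase ⟨m, hm⟩ + succSite L ⟨m, hm⟩⟩ : State L) = _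
    rw [wst_erase hm, wst_succ_add hm]
  rw [hsettle, hjump] at hrec
  rw [hrec]
  ring

lemma Hs_false {m : ℕ} (hm : m < L) (p q : ℝ) (hpq : p + q = 1) (c : Fin L → Bool) (k j : ℕ) :
    Hs p q c m (k + 1) j false
      = (if c ⟨m, hm⟩ then p else q)
        * Gs p q c (m + 1) (k + j + (if c ⟨m, hm⟩ then 0 else 1)) 0 := by
  induction k generalizing j with
  | zero =>
    rw [Hs_step hm p q c 0 j, Hs_zero hm p q c j true, Hs_zero hm p q c (j + 1) false]
    cases hcm : c ⟨m, hm⟩ with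
    | true => simp
    | false => simp
  | succ k IH =>
    rw [Hs_step hm p q c (k + 1) j, Hs_topple hm p q c k j, IH (j + 1)]
    rw [show k + (j + 1) + (if c ⟨m, hm⟩ then 0 else 1)
      = k + 1 + j + (if c ⟨m, hm⟩ then 0 else 1) from by omega]
    rw [← add_mul, hpq, one_mul]

lemma Hs_true {m : ℕ} (hm : m < L) (p q : ℝ) (hpq : p + q = 1) (c : Fin L → Bool) (k j : ℕ) :
    Hs p q c m (k + 1) j true
      = (if c ⟨m, hm⟩ then p else q)
        * Gs p q c (m + 1) (k + j + 1 + (if c ⟨m, hm⟩ then 0 else 1)) 0 := by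
  rw [Hs_topple hm p q c k j, Hs_false hm p q hpq c k (j + 1)]
  rw [show k + (j + 1) + (if c ⟨m, hm⟩ then 0 else 1)
    = k + j + 1 + (if c ⟨m, hm⟩ then 0 else 1) from by omega]

lemma Gs_split {m : ℕ} (hm : m < L) (p q : ℝ) (hpq : p + q = 1) (c : Fin L → Bool) (k j : ℕ) :
    Gs p q c m k j = p * Hs p q c m k j true + q * Hs p q c m k j false := by
  have h := split_sum p q hpq ⟨m, hm⟩
    (fun b r => stab p q ⟨zH m b c r, wst L m k j⟩ c)
    (fun b r v => by
      show stab p q ⟨zH m b c (Function.update r ⟨m, hm⟩ v), wst L m k j⟩ c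
        = stab p q ⟨zH m b c r, wst L m k j⟩ c
      rw [zH_update hm])
  rw [Hs, Hs, ← h, Gs]
  apply Finset.sum_congr rfl
  intro r _
  rw [ovr_eq_zH hm]

lemma tail_succ {m : ℕ} (hm : m < L) (f : Fin L → ℝ) :
    ∏ x ∈ Finset.univ.filter (fun x : Fin L => m ≤ x.val), f x
      = f ⟨m, hm⟩ * ∏ x ∈ Finset.univ.filter (fun x : Fin L => m + 1 ≤ x.val), f x := by
  have hset : Finset.univ.filter (fun x : Fin L => m ≤ x.val)
      = insert ⟨m, hm⟩ (Finset.univ.filter (fun x : Fin L => m + 1 ≤ x.val)) := by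
    ext x
    simp only [Finset.mem_filter, Finset.mem_insert, Finset.mem_univ, true_and, Fin.ext_iff]
    omega
  rw [hset, Finset.prod_insert (by simp)]

lemma Gs_main (p q : ℝ) (hpq : p + q = 1) (c : Fin L → Bool) :
    ∀ d m, L = m + d → ∀ k j, Gs p q c m k j
      = ∏ x ∈ Finset.univ.filter (fun x : Fin L => m ≤ x.val), (if c x then p else q) := by
  intro d
  induction d with
  | zero =>
    intro m hm k j
    have hm' : m = L := by omega
    subst hm'
    rw [show Finset.univ.filter (fun x : Fin m => m ≤ x.val) = ∅ from
      Finset.filter_false_of_mem (fun x _ => by have := x.isLt; omega)]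
    rw [Finset.prod_empty, Gs]
    have hterm : ∀ r : Fin m → Bool,
        psi p q r * stab p q ⟨ovr m c r, wst m m k j⟩ c = psi p q r := by
      intro r
      rw [show (⟨ovr m c r, wst m m k j⟩ : State m) = ⟨c, 0⟩ from by rw [ovr_top, wst_top]]
      rw [stab_of_w_eq_zero rfl p q c, if_pos rfl, mul_one]
    rw [Finset.sum_congr rfl fun r _ => hterm r]
    exact psi_sum p q hpq
  | succ d IH =>
    intro m hm k j
    have hmL : m < L := by omega
    have IH' : ∀ k', Gs p q c (m + 1) k' 0
        = ∏ x ∈ Finset.univ.filter (fun x : Fin L => m + 1 ≤ x.val), (if c x then p else q) :=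
      fun k' => IH (m + 1) (by omega) k' 0
    have htail : ∏ x ∈ Finset.univ.filter (fun x : Fin L => m ≤ x.val), (if c x then p else q)
        = (if c ⟨m, hmL⟩ then p else q)
          * ∏ x ∈ Finset.univ.filter (fun x : Fin L => m + 1 ≤ x.val), (if c x then p else q) :=
      tail_succ hmL _
    cases k with
    | zero =>
      rw [Gs_split hmL p q hpq c 0 j, Hs_zero hmL p q c j true, Hs_zero hmL p q c j false,
        htail]
      by_cases hcm : c ⟨m, hmL⟩ = true
      · rw [if_pos hcm.symm, if_neg (by simp [hcm]), if_pos hcm, IH' j]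
        ring
      · have hcf : c ⟨m, hmL⟩ = false := by simpa using hcm
        rw [if_neg (by simp [hcf]), if_pos hcf.symm, if_neg hcm, IH' j]
        ring
    | succ k =>
      rw [Gs_split hmL p q hpq c (k + 1) j, Hs_true hmL p q hpq c k j,
        Hs_false hmL p q hpq c k j, IH', IH', htail]
      set T := ∏ x ∈ Finset.univ.filter (fun x : Fin L => m + 1 ≤ x.val), (if c x then p else q)
      set w := if c ⟨m, hmL⟩ then p else q
      linear_combination w * T * hpq

/-- the product Bernoulli(p) measure `ψ` is stationary for the
driven-dissipative kernel `W` of the DSS, and `ψ(r) > 0` for every configuration `r`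
(so every configuration is recurrent). -/
theorem psi_stationary_and_positive
    (L : ℕ) (hL : 0 < L) (p q : ℝ) (hp : 0 < p) (hq : 0 < q) (hpq : p + q = 1) :
    (∀ r' : Fin L → Bool, ∑ r : Fin L → Bool, psi p q r * Wker p q r r' = psi p q r') ∧
    (∀ r : Fin L → Bool, 0 < psi p q r) := by
  constructor
  · intro r'
    have hwst : wst L 0 1 0 = (if h : 0 < L then {(⟨0, h⟩ : Fin L)} else 0) := by
      unfold wst siteM
      rw [one_nsmul, zero_nsmul, add_zero]
    have hgrain : ∀ r : Fin L → Bool,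
        addGrain r = (⟨ovr 0 r' r, wst L 0 1 0⟩ : State L) := by
      intro r
      rw [ovr_zero, hwst]
      rfl
    have h1 : ∑ r : Fin L → Bool, psi p q r * Wker p q r r' = Gs p q r' 0 1 0 := by
      unfold Gs
      apply Finset.sum_congr rfl
      intro r _
      rw [show Wker p q r r' = stab p q (addGrain r) r' from rfl, hgrain r]
    rw [h1, Gs_main p q hpq r' L 0 (by omega) 1 0]
    rw [Finset.filter_true_of_mem (fun (x : Fin L) _ => Nat.zero_le x.val)]
    exact (psi_prod p q r').symm
  · intro r
    exact mul_pos (pow_pos hp _) (pow_pos hq _)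


end DSS
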